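/- Let $d_1, d_2 \geq 1$, let $X, Y$ be finite nonempty sets of measurement settings and let $A, B$ be finite outcome sets. Suppose the correlation $p(ab|xy)$ is produced without shared randomness from a shared pure quantum state, i.e. there exist a unit vector $\psi \in \mathbb{C}^{d_1} \otimes \mathbb{C}^{d_2}$ and POVMs $\{M_{a|x}\}_{a \in A}$ on $\mathbb{C}^{d_1}$ (each $M_{a|x}$ positive semidefinite with $\sum_a M_{a|x} = I$) and $\{N_{b|y}\}_{b \in B}$ on $\mathbb{C}^{d_2}$, such that $p(ab|xy) = \langle \psi, (M_{a|x} \otimes N_{b|y})\psi \rangle$ for all $a,b,x,y$. Then $f(p) \geq 1/\min\{d_1, d_2\}$, where $f(p) := \min_{y,y' \in Y} \sum_{b,b' \in B} \min_{x \in X} \big( \sum_{a \in A} \sqrt{p(ab|xy)\, p(ab'|xy')} \big)^2$. Equivalently, $\lceil 1/f(p) \rceil \leq \min\{d_1,d_2\}$ whenever $f(p) > 0$. -/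

import Mathlib

open Kronecker Matrix
open scoped ComplexOrder

attribute [local instance] Matrix.frobeniusSeminormedAddCommGroup

namespace Matrix.PosSemidef

open scoped MatrixOrder

noncomputable def sqrt {n : Type*} [Fintype n] [DecidableEq n] {A : Matrix n n ℂ}
    (_ : A.PosSemidef) : Matrix n n ℂ := CFC.sqrt A

lemma posSemidef_sqrt {n : Type*} [Fintype n] [DecidableEq n] {A : Matrix n n ℂ}
    (hA : A.PosSemidef) : hA.sqrt.PosSemidef := (CFC.sqrt_nonneg A).posSemidef

lemma sqrt_mul_self {n : Type*} [Fintype n] [DecidableEq n] {A : Matrix n n ℂ}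
    (hA : A.PosSemidef) : hA.sqrt * hA.sqrt = A := CFC.sqrt_mul_sqrt_self A hA.nonneg

end Matrix.PosSemidef

namespace DimWitnessAux

variable {m n : Type*} [Fintype m] [Fintype n]

lemma frob_sq (A : Matrix m n ℂ) : ‖A‖ ^ 2 = ∑ i, ∑ j, ‖A i j‖ ^ 2 := by
  have h0 : (0:ℝ) ≤ ∑ i, ∑ j, ‖A i j‖ ^ (2:ℝ) := by positivity
  rw [Matrix.frobenius_norm_def, ← Real.rpow_natCast (_ ^ (1/2:ℝ)) 2, ← Real.rpow_mul h0]
  norm_num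

lemma trace_conjTranspose_mul_self (A : Matrix m n ℂ) :
    (Aᴴ * A).trace = ((‖A‖ ^ 2 : ℝ) : ℂ) := by
  have key : ∀ z : ℂ, star z * z = ((‖z‖ : ℂ)) ^ 2 := by
    intro z
    rw [show (star z) = (starRingEnd ℂ) z from rfl, mul_comm, Complex.mul_conj,
      Complex.normSq_eq_norm_sq]
    push_cast; ring
  rw [frob_sq]
  push_cast
  rw [Matrix.trace]
  simp only [Matrix.diag_apply, Matrix.mul_apply, Matrix.conjTranspose_apply]
  rw [Finset.sum_comm]
  exact Finset.sum_congr rfl fun i _ => Finset.sum_congr rfl fun j _ => key _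

lemma norm_herm_mul_comm {A B : Matrix n n ℂ} (hA : A.IsHermitian) (hB : B.IsHermitian) :
    ‖A * B‖ = ‖B * A‖ := by
  rw [← Matrix.frobenius_norm_conjTranspose (A * B), Matrix.conjTranspose_mul, hA.eq, hB.eq]

lemma trace_psd_mul [DecidableEq n]
    {σ τ : Matrix n n ℂ} (hσ : σ.PosSemidef) (hτ : τ.PosSemidef) :
    (σ * τ).trace = ((‖hσ.sqrt * hτ.sqrt‖ ^ 2 : ℝ) : ℂ) := by
  set S := hσ.sqrt
  set T := hτ.sqrt
  have h1 : (S * T)ᴴ = T * S := by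
    rw [Matrix.conjTranspose_mul, hσ.posSemidef_sqrt.1.eq, hτ.posSemidef_sqrt.1.eq]
  rw [← trace_conjTranspose_mul_self (S * T), h1]
  have h2 : T * S * (S * T) = T * σ * T := by
    rw [mul_assoc, ← mul_assoc S S T, hσ.sqrt_mul_self, mul_assoc]
  rw [h2, Matrix.trace_mul_cycle, hτ.sqrt_mul_self, Matrix.trace_mul_comm]


lemma norm_ST_le [DecidableEq n] {A : Type*} [Fintype A]
    (M : A → Matrix n n ℂ) (hM : ∀ a, (M a).PosSemidef) (hsum : ∑ a, M a = 1)
    {σ τ : Matrix n n ℂ} (hσ : σ.PosSemidef) (hτ : τ.PosSemidef) :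
    ‖hσ.sqrt * hτ.sqrt‖ ≤ ∑ a, ‖(hM a).sqrt * hσ.sqrt‖ * ‖(hM a).sqrt * hτ.sqrt‖ := by
  set S := hσ.sqrt
  set T := hτ.sqrt
  have h1 : S * T = ∑ a, S * M a * T := by
    rw [← Finset.sum_mul, ← Finset.mul_sum, hsum, mul_one]
  calc ‖S * T‖ = ‖∑ a, S * M a * T‖ := by rw [← h1]
    _ ≤ ∑ a, ‖S * M a * T‖ := norm_sum_le _ _
    _ ≤ ∑ a, ‖(hM a).sqrt * S‖ * ‖(hM a).sqrt * T‖ := by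
        refine Finset.sum_le_sum fun a _ => ?_
        have h2 : S * M a * T = (S * (hM a).sqrt) * ((hM a).sqrt * T) := by
          conv_lhs => rw [← (hM a).sqrt_mul_self]
          simp only [mul_assoc]
        calc ‖S * M a * T‖ = ‖(S * (hM a).sqrt) * ((hM a).sqrt * T)‖ := by rw [h2]
          _ ≤ ‖S * (hM a).sqrt‖ * ‖(hM a).sqrt * T‖ := Matrix.frobenius_norm_mul _ _
          _ = ‖(hM a).sqrt * S‖ * ‖(hM a).sqrt * T‖ := by
              rw [norm_herm_mul_comm hσ.posSemidef_sqrt.1 (hM a).posSemidef_sqrt.1]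

lemma key_trace {d₁ d₂ : ℕ} (M : Matrix (Fin d₁) (Fin d₁) ℂ) (N : Matrix (Fin d₂) (Fin d₂) ℂ)
    (ψ : Fin d₁ × Fin d₂ → ℂ) :
    star ψ ⬝ᵥ ((M ⊗ₖ N) *ᵥ ψ) =
      (M * (Matrix.of (fun i j => ψ (i, j)) * Nᵀ *
        (Matrix.of (fun i j => ψ (i, j)))ᴴ)).trace := by
  simp only [dotProduct, Matrix.mulVec, Matrix.kroneckerMap_apply, Pi.star_apply,
    Matrix.trace, Matrix.diag_apply, Matrix.mul_apply, Matrix.conjTranspose_apply,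
    Matrix.of_apply, Matrix.transpose_apply, Fintype.sum_prod_type,
    Finset.mul_sum, Finset.sum_mul]
  refine Finset.sum_congr rfl fun i _ => ?_
  rw [Finset.sum_comm]
  refine Finset.sum_congr rfl fun i' _ => Finset.sum_congr rfl fun j _ =>
    Finset.sum_congr rfl fun j' _ => ?_
  ring

lemma trace_sq_lower {k : ℕ} (B : Matrix (Fin k) (Fin k) ℂ) (hB : B.IsHermitian) :
    (B.trace.re) ^ 2 ≤ (k : ℝ) * ((B * B).trace.re) := by
  have h1 : (B * B).trace = ((‖B‖ ^ 2 : ℝ) : ℂ) := by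
    rw [show B * B = Bᴴ * B from by rw [hB.eq]]
    exact trace_conjTranspose_mul_self B
  have h2 : ((B * B).trace.re) = ∑ i, ∑ j, ‖B i j‖ ^ 2 := by
    rw [h1, Complex.ofReal_re, frob_sq]
  have h3 : (B.trace.re) = ∑ i, (B i i).re := by
    rw [Matrix.trace, Complex.re_sum]; rfl
  rw [h2, h3]
  calc (∑ i, (B i i).re) ^ 2 ≤ (Finset.univ.card : ℝ) * ∑ i, (B i i).re ^ 2 :=
        sq_sum_le_card_mul_sum_sq
    _ ≤ (k : ℝ) * ∑ i, ∑ j, ‖B i j‖ ^ 2 := by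
        rw [Finset.card_univ, Fintype.card_fin]
        refine mul_le_mul_of_nonneg_left (Finset.sum_le_sum fun i _ => ?_) (by positivity)
        calc (B i i).re ^ 2 ≤ ‖B i i‖ ^ 2 := by
              rw [← sq_abs]
              exact pow_le_pow_left₀ (abs_nonneg _) (Complex.abs_re_le_norm _) 2
          _ ≤ ∑ j, ‖B i j‖ ^ 2 :=
              Finset.single_le_sum (f := fun j => ‖B i j‖ ^ 2)
                (fun j _ => by positivity) (Finset.mem_univ i)

end DimWitnessAux


/-- Device-independent dimension witness (Sikora–Varvitsiotis–Wei): if a bipartite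
correlation `p(ab|xy)` is produced without shared randomness from a pure state
`ψ ∈ ℂ^{d₁} ⊗ ℂ^{d₂}` via POVMs `{M_{a|x}}` and `{N_{b|y}}`, then
`f(p) ≥ 1 / min{d₁, d₂}`, where
`f(p) = min_{y,y'} ∑_{b,b'} min_x (∑_a √(p(ab|xy) p(ab'|xy')))²`.
Equivalently, `⌈1/f(p)⌉ ≤ min{d₁,d₂}` whenever `f(p) > 0`. -/
theorem dimension_witness_bound
    (d₁ d₂ : ℕ) (hd₁ : 1 ≤ d₁) (hd₂ : 1 ≤ d₂)
    (X Y A B : Type) [Fintype X] [Fintype Y] [Fintype A] [Fintype B]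
    [Nonempty X] [Nonempty Y]
    (ψ : Fin d₁ × Fin d₂ → ℂ) (hψ : ∑ i, ‖ψ i‖ ^ 2 = 1)
    (M : X → A → Matrix (Fin d₁) (Fin d₁) ℂ)
    (N : Y → B → Matrix (Fin d₂) (Fin d₂) ℂ)
    (hMpos : ∀ x a, (M x a).PosSemidef)
    (hMsum : ∀ x, ∑ a, M x a = 1)
    (hNpos : ∀ y b, (N y b).PosSemidef)
    (hNsum : ∀ y, ∑ b, N y b = 1)
    (p : A → B → X → Y → ℝ)
    (hp : ∀ a b x y, (p a b x y : ℂ) = star ψ ⬝ᵥ ((M x a ⊗ₖ N y b) *ᵥ ψ))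
    (fval : ℝ)
    (hf : fval =
      Finset.univ.inf' Finset.univ_nonempty (fun yy' : Y × Y =>
        ∑ b : B, ∑ b' : B,
          Finset.univ.inf' Finset.univ_nonempty (fun x : X =>
            (∑ a : A, Real.sqrt (p a b x yy'.1 * p a b' x yy'.2)) ^ 2))) :
    1 / (min d₁ d₂ : ℝ) ≤ fval ∧
    (0 < fval → ⌈1 / fval⌉ ≤ (min d₁ d₂ : ℤ)) := by
  classical
  set Ψ : Matrix (Fin d₁) (Fin d₂) ℂ := Matrix.of (fun i j => ψ (i, j)) with hΨdef
  set τ : Y → B → Matrix (Fin d₁) (Fin d₁) ℂ := fun y b => Ψ * (N y b)ᵀ * Ψᴴ with hτdef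
  have hτpsd : ∀ y b, (τ y b).PosSemidef :=
    fun y b => ((hNpos y b).transpose).mul_mul_conjTranspose_same Ψ
  have hptr : ∀ a b x y, (p a b x y : ℂ) = (M x a * τ y b).trace :=
    fun a b x y => (hp a b x y).trans (DimWitnessAux.key_trace (M x a) (N y b) ψ)
  have hpval : ∀ a b x y, p a b x y = ‖(hMpos x a).sqrt * (hτpsd y b).sqrt‖ ^ 2 := by
    intro a b x y
    have h := (hptr a b x y).trans (DimWitnessAux.trace_psd_mul (hMpos x a) (hτpsd y b))
    exact_mod_cast h
  have hρsum : ∀ y, ∑ b, τ y b = Ψ * Ψᴴ := by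
    intro y
    simp only [hτdef]
    rw [← Matrix.sum_mul, ← Matrix.mul_sum, ← Matrix.transpose_sum, hNsum y,
      Matrix.transpose_one, Matrix.mul_one]
  have htr1 : (Ψ * Ψᴴ).trace = ((1:ℝ):ℂ) := by
    have h0 : (Ψ * Ψᴴ).trace = ((Ψᴴ)ᴴ * Ψᴴ).trace := by
      rw [Matrix.conjTranspose_conjTranspose]
    rw [h0, DimWitnessAux.trace_conjTranspose_mul_self, Matrix.frobenius_norm_conjTranspose]
    norm_cast
    rw [DimWitnessAux.frob_sq]
    rw [show (∑ i, ∑ j, ‖Ψ i j‖ ^ 2) = ∑ q : Fin d₁ × Fin d₂, ‖ψ q‖ ^ 2 from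
      (Fintype.sum_prod_type (f := fun q : Fin d₁ × Fin d₂ => ‖ψ q‖ ^ 2)).symm]
    exact hψ
  set c : ℝ := ((Ψ * Ψᴴ) * (Ψ * Ψᴴ)).trace.re with hc
  have hretr : (Ψ * Ψᴴ).trace.re = 1 := by rw [htr1]; simp
  have hd1bound : 1 ≤ (d₁ : ℝ) * c := by
    have h := DimWitnessAux.trace_sq_lower (Ψ * Ψᴴ)
      (Matrix.isHermitian_mul_conjTranspose_self Ψ)
    rw [hretr] at h
    simpa using h
  have hd2bound : 1 ≤ (d₂ : ℝ) * c := by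
    have hherm2 : (Ψᴴ * Ψ).IsHermitian := by
      simpa using Matrix.isHermitian_mul_conjTranspose_self Ψᴴ
    have h := DimWitnessAux.trace_sq_lower (Ψᴴ * Ψ) hherm2
    have h1 : (Ψᴴ * Ψ).trace = (Ψ * Ψᴴ).trace := Matrix.trace_mul_comm _ _
    have h2 : ((Ψᴴ * Ψ) * (Ψᴴ * Ψ)).trace = ((Ψ * Ψᴴ) * (Ψ * Ψᴴ)).trace := by
      rw [Matrix.mul_assoc, Matrix.trace_mul_comm]
      congr 1
      simp only [Matrix.mul_assoc]
    rw [h1, h2, hretr] at h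
    simpa using h
  have hminpos : (0:ℝ) < ((min d₁ d₂ : ℕ) : ℝ) := by
    have : 1 ≤ min d₁ d₂ := le_min hd₁ hd₂
    exact_mod_cast Nat.lt_of_lt_of_le Nat.zero_lt_one this
  have hmin : 1 / ((min d₁ d₂ : ℕ) : ℝ) ≤ c := by
    rw [div_le_iff₀ hminpos] at *
    rcases min_cases d₁ d₂ with ⟨hm, _⟩ | ⟨hm, _⟩ <;> rw [hm]
    · linarith [hd1bound]
    · linarith [hd2bound]
  have hsum_eq : ∀ y y', (∑ b : B, ∑ b' : B,
      ‖(hτpsd y b).sqrt * (hτpsd y' b').sqrt‖ ^ 2) = c := by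
    intro y y'
    have hC : ((∑ b : B, ∑ b' : B,
        (‖(hτpsd y b).sqrt * (hτpsd y' b').sqrt‖ ^ 2 : ℝ)) : ℂ)
        = ((Ψ * Ψᴴ) * (Ψ * Ψᴴ)).trace := by
      push_cast
      calc (∑ b : B, ∑ b' : B, ((‖(hτpsd y b).sqrt * (hτpsd y' b').sqrt‖ : ℂ)) ^ 2)
          = ∑ b : B, ∑ b' : B, (τ y b * τ y' b').trace := by
            refine Finset.sum_congr rfl fun b _ => Finset.sum_congr rfl fun b' _ => ?_
            rw [DimWitnessAux.trace_psd_mul (hτpsd y b) (hτpsd y' b')]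
            push_cast; ring
        _ = ((∑ b, τ y b) * (∑ b', τ y' b')).trace := by
            rw [Finset.sum_mul_sum]
            simp only [Matrix.trace_sum]
        _ = ((Ψ * Ψᴴ) * (Ψ * Ψᴴ)).trace := by rw [hρsum y, hρsum y']
    rw [hc, ← hC]
    simp [Complex.re_sum, ← Complex.ofReal_pow]
  have hx : ∀ y y' b b' x,
      ‖(hτpsd y b).sqrt * (hτpsd y' b').sqrt‖ ^ 2 ≤
        (∑ a : A, Real.sqrt (p a b x y * p a b' x y')) ^ 2 := by
    intro y y' b b' x
    have h1 : ∀ a : A, Real.sqrt (p a b x y * p a b' x y')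
        = ‖(hMpos x a).sqrt * (hτpsd y b).sqrt‖ *
          ‖(hMpos x a).sqrt * (hτpsd y' b').sqrt‖ := by
      intro a
      rw [hpval a b x y, hpval a b' x y', Real.sqrt_mul (by positivity),
        Real.sqrt_sq (norm_nonneg _), Real.sqrt_sq (norm_nonneg _)]
    have h2 := DimWitnessAux.norm_ST_le (M x) (hMpos x) (hMsum x) (hτpsd y b) (hτpsd y' b')
    calc ‖(hτpsd y b).sqrt * (hτpsd y' b').sqrt‖ ^ 2
        ≤ (∑ a, ‖(hMpos x a).sqrt * (hτpsd y b).sqrt‖ *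
            ‖(hMpos x a).sqrt * (hτpsd y' b').sqrt‖) ^ 2 :=
          pow_le_pow_left₀ (norm_nonneg _) h2 2
      _ = (∑ a : A, Real.sqrt (p a b x y * p a b' x y')) ^ 2 := by
          congr 1
          exact Finset.sum_congr rfl fun a _ => (h1 a).symm
  have hpair : ∀ yy' : Y × Y, 1 / ((min d₁ d₂ : ℕ) : ℝ) ≤
      ∑ b : B, ∑ b' : B, Finset.univ.inf' Finset.univ_nonempty (fun x : X =>
        (∑ a : A, Real.sqrt (p a b x yy'.1 * p a b' x yy'.2)) ^ 2) := by
    intro yy'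
    refine hmin.trans ?_
    rw [← hsum_eq yy'.1 yy'.2]
    refine Finset.sum_le_sum fun b _ => Finset.sum_le_sum fun b' _ => ?_
    exact Finset.le_inf' _ _ fun x _ => hx yy'.1 yy'.2 b b' x
  have h1 : 1 / ((min d₁ d₂ : ℕ) : ℝ) ≤ fval := by
    rw [hf]
    exact Finset.le_inf' _ _ fun yy' _ => hpair yy'
  have h1' : 1 / ((d₁ : ℝ) ⊓ (d₂ : ℝ)) ≤ fval := by
    rw [← Nat.cast_min]; exact h1
  refine ⟨h1', fun hpos => ?_⟩
  rw [Int.ceil_le]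
  have h2 : 1 ≤ fval * ((min d₁ d₂ : ℕ) : ℝ) := by
    rw [div_le_iff₀ hminpos] at h1
    linarith
  push_cast
  push_cast at h2
  rw [div_le_iff₀ hpos, mul_comm]
  exact h2
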